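/- Let Γ be a group, a ∈ Γ an element of infinite order, b ∈ Γ and m > 0 with b a^m b⁻¹ = a^{-m}. If b² has infinite order, then the subgroup generated by a^m and b² is isomorphic to ℤ². -/

import Mathlib

/-- If `a` has infinite order, `b * a^m * b⁻¹ = a^{-m}` with `m > 0`, and `b²`
has infinite order, then the subgroup generated by `a^m` and `b²` is isomorphic to `ℤ²`. -/
theorem stmt2 {Γ : Type*} [Group Γ] (a b : Γ) (m : ℕ) (hm : 0 < m)
    (ha : ¬ IsOfFinOrder a)
    (h : b * a ^ m * b⁻¹ = (a ^ m)⁻¹)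
    (hb2 : ¬ IsOfFinOrder (b ^ 2)) :
    Nonempty ((Subgroup.closure {a ^ m, b ^ 2} : Subgroup Γ) ≃* Multiplicative (ℤ × ℤ)) := by
  set x := a ^ m with hx
  set y := b ^ 2 with hy
  -- x has infinite order
  have hxinf : ¬ IsOfFinOrder x := by
    intro hfin
    exact ha (hfin.of_pow hm.ne')
  have hxo : orderOf x = 0 := orderOf_eq_zero hxinf
  have hyo : orderOf y = 0 := orderOf_eq_zero hb2
  -- commutation
  have hbx : b * x * b⁻¹ = x⁻¹ := h
  have hc : Commute x y := by
    have h1 : b * x = x⁻¹ * b := by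
      have := hbx
      rw [← this]; group
    have : y * x = x * y := by
      rw [hy, pow_two]
      calc b * b * x = b * (b * x) := by rw [mul_assoc]
        _ = b * (x⁻¹ * b) := by rw [h1]
        _ = (b * x⁻¹ * b⁻¹) * (b * b) := by group
        _ = x * (b * b) := by
            have : b * x⁻¹ * b⁻¹ = (b * x * b⁻¹)⁻¹ := by group
            rw [this, hbx, inv_inv]
    exact this.symm
  -- the homomorphism
  let f : Multiplicative (ℤ × ℤ) →* Γ := MonoidHom.mk'
    (fun p => x ^ (Multiplicative.toAdd p).1 * y ^ (Multiplicative.toAdd p).2)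
    (by
      intro p q
      simp only [toAdd_mul, Prod.fst_add, Prod.snd_add, zpow_add]
      calc x ^ (Multiplicative.toAdd p).1 * x ^ (Multiplicative.toAdd q).1 *
            (y ^ (Multiplicative.toAdd p).2 * y ^ (Multiplicative.toAdd q).2)
          = x ^ (Multiplicative.toAdd p).1 * (x ^ (Multiplicative.toAdd q).1 *
            y ^ (Multiplicative.toAdd p).2) * y ^ (Multiplicative.toAdd q).2 := by group
        _ = x ^ (Multiplicative.toAdd p).1 * (y ^ (Multiplicative.toAdd p).2 *
            x ^ (Multiplicative.toAdd q).1) * y ^ (Multiplicative.toAdd q).2 := by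
            rw [(hc.zpow_zpow _ _).eq]
        _ = _ := by group)
  have hf : ∀ p : Multiplicative (ℤ × ℤ),
      f p = x ^ (Multiplicative.toAdd p).1 * y ^ (Multiplicative.toAdd p).2 := fun _ => rfl
  -- conjugation by b on zpowers
  have hbxz : ∀ i : ℤ, b * x ^ i * b⁻¹ = x ^ (-i) := by
    intro i
    have : (MulAut.conj b) (x ^ i) = ((MulAut.conj b) x) ^ i := map_zpow _ _ _
    simpa [MulAut.conj_apply, hbx, zpow_neg] using this
  have hbyz : ∀ j : ℤ, b * y ^ j * b⁻¹ = y ^ j := by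
    intro j
    have hcy : Commute b y := by rw [hy, pow_two]; exact (Commute.refl b).mul_right (Commute.refl b)
    rw [(hcy.zpow_right j).eq, mul_assoc, mul_inv_cancel, mul_one]
  -- injectivity
  have hinj : Function.Injective f := by
    rw [injective_iff_map_eq_one]
    intro p hp
    set i := (Multiplicative.toAdd p).1
    set j := (Multiplicative.toAdd p).2
    have hp' : x ^ i * y ^ j = 1 := hp
    have hp2 : x ^ (-i) * y ^ j = 1 := by
      have := congrArg (fun g => b * g * b⁻¹) hp'
      calc x ^ (-i) * y ^ j = (b * x ^ i * b⁻¹) * (b * y ^ j * b⁻¹) := by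
            rw [hbxz, hbyz]
        _ = b * (x ^ i * y ^ j) * b⁻¹ := by group
        _ = 1 := by rw [hp']; group
    have hxx : x ^ i = x ^ (-i) := by
      have e1 : x ^ i = (y ^ j)⁻¹ := eq_inv_of_mul_eq_one_left hp'
      have e2 : x ^ (-i) = (y ^ j)⁻¹ := eq_inv_of_mul_eq_one_left hp2
      rw [e1, e2]
    have h2i : x ^ (2 * i) = 1 := by
      rw [two_mul, zpow_add]
      nth_rewrite 2 [hxx]
      rw [zpow_neg, mul_inv_cancel]
    have hi : i = 0 := by
      have := orderOf_dvd_iff_zpow_eq_one.mpr h2i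
      rw [hxo] at this
      have : (2 * i : ℤ) = 0 := by exact_mod_cast zero_dvd_iff.mp (by exact_mod_cast this)
      omega
    have hj : j = 0 := by
      rw [hi, zpow_zero, one_mul] at hp'
      have := orderOf_dvd_iff_zpow_eq_one.mpr hp'
      rw [hyo] at this
      exact_mod_cast zero_dvd_iff.mp (by exact_mod_cast this)
    have : Multiplicative.toAdd p = 0 := Prod.ext hi hj
    simpa using this
  -- range = closure
  have hxm : x ∈ Subgroup.closure {x, y} := Subgroup.subset_closure (by left; rfl)
  have hym : y ∈ Subgroup.closure {x, y} := Subgroup.subset_closure (by right; rfl)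
  have hrange : f.range = Subgroup.closure {x, y} := by
    apply le_antisymm
    · rintro _ ⟨p, rfl⟩
      rw [hf]
      exact mul_mem (Subgroup.zpow_mem _ hxm _) (Subgroup.zpow_mem _ hym _)
    · rw [Subgroup.closure_le]
      rintro g hg
      rcases hg with rfl | rfl
      · refine ⟨Multiplicative.ofAdd ((1, 0) : ℤ × ℤ), ?_⟩
        rw [hf]; simp
      · refine ⟨Multiplicative.ofAdd ((0, 1) : ℤ × ℤ), ?_⟩
        rw [hf]; simp
  exact ⟨((MonoidHom.ofInjective hinj).trans (MulEquiv.subgroupCongr hrange)).symm⟩
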